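/- Let P be an uncertain point set of n points each with k locations in ℝ^d, let 𝒜 be a family of ranges, and let χ : P → {−1,+1} be any coloring with |P_χ^+| = n/2. Then RE-disc_χ(P, 𝒜) ≤ max_{j∈[k]} disc_{χ_cert}(P_j, 𝒜), where P_j is the j-th canonical transversal of P. -/

import Mathlib

open Finset
open scoped Classical

noncomputable section

/-- The probability that an uncertain point with `k` possible locations `p 0, …, p (k-1)`,
each taken with probability `1/k`, lies in the range `r`. -/
def probIn {α : Type*} {k : ℕ} (p : Fin k → α) (r : Set α) : ℝ :=
  ((Finset.univ.filter fun j => p j ∈ r).card : ℝ) / k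

/-- `E_{r(S)}`: the expected fraction of the uncertain points indexed by `S`
that lie in the range `r`, for the uncertain point set `P`. -/
def REexp {α : Type*} {n k : ℕ} (P : Fin n → Fin k → α) (S : Finset (Fin n)) (r : Set α) : ℝ :=
  (∑ i ∈ S, probIn (P i) r) / S.card

/-- `P_χ^+`: the uncertain points colored `+1` by `χ`. -/
def Pplus {n : ℕ} (χ : Fin n → ℤ) : Finset (Fin n) :=
  Finset.univ.filter fun i => χ i = 1

/-- `RE-disc_χ(P, r) = |P| · |E_{r(P_χ^+)} - E_{r(P)}|`. -/
def REdisc {α : Type*} {n k : ℕ} (P : Fin n → Fin k → α) (χ : Fin n → ℤ) (r : Set α) : ℝ :=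
  n * |REexp P (Pplus χ) r - REexp P Finset.univ r|

/-- The discrepancy of the coloring `χ` on the point set `f 0, …, f (n-1)` in range `r`
(used for the canonical transversal `P_j` with its coloring induced from `χ`). -/
def discIdx {α : Type*} {n : ℕ} (f : Fin n → α) (χ : Fin n → ℤ) (r : Set α) : ℝ :=
  |∑ i ∈ Finset.univ.filter (fun i => f i ∈ r), (χ i : ℝ)|

/-- For any balanced `±1` coloring `χ` of the uncertain points,
`RE-disc_χ(P, 𝒜) ≤ max_{j ∈ [k]} disc_{χ_cert}(P_j, 𝒜)` where `P_j` is the `j`-th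
canonical transversal. -/
theorem stmt5 {n k d : ℕ} (hn : 0 < n) (hk : 0 < k)
    (P : Fin n → Fin k → (Fin d → ℝ))
    (hinj : Function.Injective fun q : Fin n × Fin k => P q.1 q.2)
    (𝒜 : Set (Set (Fin d → ℝ)))
    (χ : Fin n → ℤ) (hχ : ∀ i, χ i = 1 ∨ χ i = -1)
    (hbal : 2 * (Pplus χ).card = n) :
    (⨆ r ∈ 𝒜, REdisc P χ r) ≤ ⨆ j : Fin k, ⨆ r ∈ 𝒜, discIdx (fun i => P i j) χ r := by
  classical
  set RHS := ⨆ j : Fin k, ⨆ r ∈ 𝒜, discIdx (fun i => P i j) χ r with hRHSdef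
  have hχabs : ∀ i, |(χ i : ℝ)| = 1 := by
    intro i; rcases hχ i with h | h <;> simp [h]
  have hdisc_le : ∀ (j : Fin k) (r : Set (Fin d → ℝ)), discIdx (fun i => P i j) χ r ≤ n := by
    intro j r
    unfold discIdx
    calc |∑ i ∈ univ.filter (fun i => P i j ∈ r), (χ i : ℝ)|
        ≤ ∑ i ∈ univ.filter (fun i => P i j ∈ r), |(χ i : ℝ)| :=
          Finset.abs_sum_le_sum_abs _ _
      _ = ((univ.filter (fun i => P i j ∈ r)).card : ℝ) := by simp [hχabs]
      _ ≤ (n : ℝ) := by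
          have h := Finset.card_filter_le (univ : Finset (Fin n)) (fun i => P i j ∈ r)
          simp only [Finset.card_univ, Fintype.card_fin] at h
          exact_mod_cast h
  have h1 : ∀ j : Fin k,
      BddAbove (Set.range fun r => ⨆ _ : r ∈ 𝒜, discIdx (fun i => P i j) χ r) := by
    intro j
    refine ⟨n, ?_⟩
    rintro x ⟨r, rfl⟩
    exact Real.iSup_le (fun _ => hdisc_le j r) (by positivity)
  have h2 : BddAbove (Set.range fun j : Fin k => ⨆ r ∈ 𝒜, discIdx (fun i => P i j) χ r) :=
    Set.Finite.bddAbove (Set.finite_range _)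
  have hRHS_le : ∀ j : Fin k, (⨆ r ∈ 𝒜, discIdx (fun i => P i j) χ r) ≤ RHS := by
    intro j; rw [hRHSdef]; exact le_ciSup h2 j
  have hRHS0 : 0 ≤ RHS := by
    refine le_trans ?_ (hRHS_le ⟨0, hk⟩)
    exact Real.iSup_nonneg fun r => Real.iSup_nonneg fun _ => abs_nonneg _
  have hkey : ∀ j : Fin k, ∀ r ∈ 𝒜, discIdx (fun i => P i j) χ r ≤ RHS := by
    intro j r hr
    have b1 : discIdx (fun i => P i j) χ r ≤ ⨆ _ : r ∈ 𝒜, discIdx (fun i => P i j) χ r :=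
      le_ciSup (f := fun _ : r ∈ 𝒜 => discIdx (fun i => P i j) χ r)
        ⟨discIdx (fun i => P i j) χ r, by rintro x ⟨_, rfl⟩; exact le_rfl⟩ hr
    exact le_trans b1 (le_trans (le_ciSup (h1 j) r) (hRHS_le j))
  have hmain : ∀ r ∈ 𝒜, REdisc P χ r ≤ RHS := by
    intro r hr
    have hcard : 2 * ((Pplus χ).card : ℝ) = n := by exact_mod_cast hbal
    have hcpos : (0:ℝ) < ((Pplus χ).card : ℝ) := by
      have : (Pplus χ).card ≠ 0 := by omega
      positivity
    have hn' : (n:ℝ) ≠ 0 := Nat.cast_ne_zero.mpr hn.ne'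
    set A := ∑ i ∈ Pplus χ, probIn (P i) r with hA
    set B := ∑ i ∈ (univ : Finset (Fin n)), probIn (P i) r with hB
    have hx : (n:ℝ) * (A / ((Pplus χ).card : ℝ) - B / n) = 2 * A - B := by
      field_simp
      linear_combination (-A) * hcard
    have e1 : REdisc P χ r = |2 * A - B| := by
      unfold REdisc REexp
      rw [Finset.card_univ, Fintype.card_fin, ← hA, ← hB, ← hx, abs_mul,
        abs_of_nonneg (by positivity : (0:ℝ) ≤ (n:ℝ))]
    have hAval : ∑ i ∈ Pplus χ, (χ i : ℝ) * probIn (P i) r = A := by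
      rw [hA]
      refine Finset.sum_congr rfl fun i hi => ?_
      have h : χ i = 1 := by simpa [Pplus] using hi
      simp [h]
    have hcomp : ∑ i ∈ (univ : Finset (Fin n)) \ Pplus χ, (χ i : ℝ) * probIn (P i) r
        = -(B - A) := by
      have step : ∑ i ∈ (univ : Finset (Fin n)) \ Pplus χ, (χ i : ℝ) * probIn (P i) r
          = ∑ i ∈ (univ : Finset (Fin n)) \ Pplus χ, -(probIn (P i) r) := by
        refine Finset.sum_congr rfl fun i hi => ?_
        have h1' : χ i ≠ 1 := by
          simp only [Finset.mem_sdiff, Pplus, Finset.mem_filter, Finset.mem_univ,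
            true_and] at hi
          exact hi
        have h2' : χ i = -1 := (hχ i).resolve_left h1'
        simp [h2']
      rw [step, Finset.sum_neg_distrib, Finset.sum_sdiff_eq_sub (Finset.subset_univ _),
        ← hA, ← hB]
    have esum : ∑ i : Fin n, (χ i : ℝ) * probIn (P i) r = 2 * A - B := by
      have := Finset.sum_sdiff (f := fun i => (χ i : ℝ) * probIn (P i) r)
        (Finset.subset_univ (Pplus χ))
      rw [hAval, hcomp] at this
      simp only [← this]
      ring
    have e3 : ∑ i : Fin n, (χ i : ℝ) * probIn (P i) r
        = (∑ j : Fin k, ∑ i ∈ univ.filter (fun i => P i j ∈ r), (χ i : ℝ)) / k := by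
      have hterm : ∀ i, (χ i : ℝ) * probIn (P i) r
          = (∑ j : Fin k, if P i j ∈ r then (χ i : ℝ) else 0) / k := by
        intro i
        rw [← Finset.sum_filter, Finset.sum_const, nsmul_eq_mul]
        unfold probIn
        ring
      calc ∑ i : Fin n, (χ i : ℝ) * probIn (P i) r
          = ∑ i : Fin n, (∑ j : Fin k, if P i j ∈ r then (χ i : ℝ) else 0) / k := by
            exact Finset.sum_congr rfl fun i _ => hterm i
        _ = (∑ i : Fin n, ∑ j : Fin k, if P i j ∈ r then (χ i : ℝ) else 0) / k := by
            rw [Finset.sum_div]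
        _ = (∑ j : Fin k, ∑ i ∈ univ.filter (fun i => P i j ∈ r), (χ i : ℝ)) / k := by
            rw [Finset.sum_comm]
            congr 1
            exact Finset.sum_congr rfl fun j _ => (Finset.sum_filter _ _).symm
    have hk' : (0:ℝ) < (k:ℝ) := by exact_mod_cast hk
    calc REdisc P χ r
        = |(∑ j : Fin k, ∑ i ∈ univ.filter (fun i => P i j ∈ r), (χ i : ℝ)) / k| := by
          rw [e1, ← esum, e3]
      _ = |∑ j : Fin k, ∑ i ∈ univ.filter (fun i => P i j ∈ r), (χ i : ℝ)| / k := by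
          rw [abs_div, abs_of_pos hk']
      _ ≤ (∑ j : Fin k, |∑ i ∈ univ.filter (fun i => P i j ∈ r), (χ i : ℝ)|) / k := by
          gcongr
          exact Finset.abs_sum_le_sum_abs _ _
      _ ≤ (∑ _j : Fin k, RHS) / k := by
          gcongr with j hj
          exact hkey j r hr
      _ = RHS := by
          rw [Finset.sum_const, Finset.card_univ, Fintype.card_fin, nsmul_eq_mul]
          field_simp
  refine Real.iSup_le (fun r => ?_) hRHS0
  exact Real.iSup_le (fun hr => hmain r hr) hRHS0

end
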